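/- Descartes' rule of signs: for a real polynomial a(x) = a₀xⁿ + ⋯ + a_n, the number of positive real roots counted with multiplicity does not exceed the number of sign changes ν(a) in the sequence of nonzero coefficients, and ν(a) minus the number of positive roots is a nonnegative even integer. -/

import Mathlib

noncomputable section

open List

noncomputable def sv1 (x : ℝ) : List ℝ → ℕ
  | [] => 0
  | y :: t => if y = 0 then sv1 x t else (if x * y < 0 then 1 else 0) + sv1 y t

noncomputable def sv : List ℝ → ℕ
  | [] => 0
  | x :: t => if x = 0 then sv t else sv1 x t

/-- The number of sign changes in a list of reals: zero entries are discarded and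
adjacent pairs of opposite sign are counted. -/
noncomputable def signChanges (l : List ℝ) : ℕ :=
  let l' := l.filter (fun x => decide (x ≠ 0))
  (l'.zip l'.tail).countP (fun p => decide (p.1 * p.2 < 0))

lemma filter_cons_zero (t : List ℝ) :
    (0 :: t).filter (fun x => decide (x ≠ 0)) = t.filter (fun x => decide (x ≠ 0)) := by
  rw [List.filter_cons, if_neg (by simp)]

lemma filter_cons_nz {y : ℝ} (hy : y ≠ 0) (t : List ℝ) :
    (y :: t).filter (fun x => decide (x ≠ 0)) = y :: t.filter (fun x => decide (x ≠ 0)) := by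
  rw [List.filter_cons, if_pos (by simpa using hy)]

lemma cp_aux (x : ℝ) (hx : x ≠ 0) :
    ∀ l : List ℝ,
      ((x :: l.filter (fun z => decide (z ≠ 0))).zip
        (l.filter (fun z => decide (z ≠ 0)))).countP (fun p => decide (p.1 * p.2 < 0))
        = sv1 x l := by
  intro l
  induction l generalizing x with
  | nil => simp [sv1]
  | cons y t ih =>
    by_cases hy : y = 0
    · subst hy; rw [filter_cons_zero]
      show _ = sv1 x (0 :: t)
      rw [show sv1 x (0 :: t) = sv1 x t from by rw [sv1, if_pos rfl]]
      exact ih x hx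
    · rw [filter_cons_nz hy, zip_cons_cons, countP_cons]
      simp only [sv1, if_neg hy, ih y hy]
      by_cases h : x * y < 0 <;> simp [h, Nat.add_comm]

lemma signChanges_eq_sv (l : List ℝ) : signChanges l = sv l := by
  induction l with
  | nil => simp [signChanges, sv]
  | cons x t ih =>
    by_cases hx : x = 0
    · subst hx
      show _ = sv (0 :: t)
      unfold signChanges at ih ⊢
      rw [filter_cons_zero]
      simpa [sv] using ih
    · unfold signChanges
      rw [filter_cons_nz hx]
      simp only [sv, if_neg hx]
      rw [List.tail_cons]
      exact cp_aux x hx t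

lemma sv1_nil (x : ℝ) : sv1 x [] = 0 := rfl
lemma sv1_cons_zero (x : ℝ) (t : List ℝ) : sv1 x (0 :: t) = sv1 x t := by
  rw [sv1, if_pos rfl]
lemma sv1_cons_nz (x : ℝ) {y : ℝ} (hy : y ≠ 0) (t : List ℝ) :
    sv1 x (y :: t) = (if x * y < 0 then 1 else 0) + sv1 y t := by
  rw [sv1, if_neg hy]
lemma sv_cons_zero (t : List ℝ) : sv (0 :: t) = sv t := by rw [sv, if_pos rfl]
lemma sv_cons_nz {x : ℝ} (hx : x ≠ 0) (t : List ℝ) : sv (x :: t) = sv1 x t := by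
  rw [sv, if_neg hx]

/-- `d c B` is the list of decrements of the path `c, B₀, …, Bₙ, 0`. -/
noncomputable def d : ℝ → List ℝ → List ℝ
  | c, [] => [c]
  | c, x :: t => (c - x) :: d x t

lemma sgn_trans {u v w : ℝ} (huv : 0 < u * v) (hw : w * u < 0) : w * v < 0 := by
  by_contra h'
  push_neg at h'
  have h1 : 0 ≤ w * v * (u * u) := mul_nonneg h' (mul_self_nonneg u)
  have h2 : (w * u) * (u * v) < 0 := mul_neg_of_neg_of_pos hw huv
  nlinarith

lemma beta_ineq {a p x : ℝ} (ha : a ≠ 0) (hp : p ≠ 0) (hx : x ≠ 0) (he : p - x ≠ 0) :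
    ((if p * x < 0 then 1 else 0) : ℕ) + (if a * p < 0 then 1 else 0) ≤
      (if a * (p - x) < 0 then 1 else 0) + (if (p - x) * x < 0 then 1 else 0) := by
  rcases lt_or_gt_of_ne (mul_ne_zero hp hx) with hpx | hpx
  · -- p and x have opposite signs; p - x has the sign of p
    have hep : 0 < (p - x) * p := by nlinarith [mul_self_pos.mpr hp, mul_self_pos.mpr hx]
    have hex : (p - x) * x < 0 := by nlinarith [mul_self_pos.mpr hx]
    rw [if_pos hpx, if_pos hex]
    have : (if a * p < 0 then 1 else 0 : ℕ) ≤ (if a * (p - x) < 0 then 1 else 0) := by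
      split_ifs with h1 h2
      · omega
      · exact absurd (sgn_trans (by linarith [mul_comm p (p-x)] : 0 < p * (p - x)) h1) h2
      · omega
      · omega
    omega
  · -- p and x have the same sign
    rw [if_neg (by linarith : ¬ p * x < 0)]
    by_cases hap : a * p < 0
    · rw [if_pos hap]
      have : a * (p - x) < 0 ∨ (p - x) * x < 0 := by
        by_contra hcon
        push_neg at hcon
        obtain ⟨h1, h2⟩ := hcon
        have h1' : 0 < a * (p - x) :=
          lt_of_le_of_ne h1 (Ne.symm (mul_ne_zero ha he))
        have h2' : 0 < (p - x) * x :=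
          lt_of_le_of_ne h2 (Ne.symm (mul_ne_zero he hx))
        -- then a and x have the same sign, and p and x same sign, so a*p > 0
        have hax : 0 < a * x := by nlinarith [mul_self_pos.mpr he]
        nlinarith [mul_self_pos.mpr hx]
      rcases this with h | h
      · rw [if_pos h]; omega
      · rw [if_pos h]; omega
    · rw [if_neg hap]
      split_ifs <;> omega

lemma master : ∀ (B : List ℝ) (p a : ℝ), a ≠ 0 →
    (if p = 0 then sv1 a B else sv1 p B + (if a * p < 0 then 1 else 0)) ≤ sv1 a (d p B) := by
  intro B
  induction B with
  | nil =>
    intro p a ha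
    by_cases hp : p = 0
    · subst hp; simp [d, sv1_cons_zero, sv1_nil]
    · rw [if_neg hp]
      show sv1 p [] + _ ≤ sv1 a [p]
      rw [sv1_nil, sv1_cons_nz a hp, sv1_nil]
      omega
  | cons x B' ih =>
    intro p a ha
    show _ ≤ sv1 a (d p (x :: B'))
    rw [show d p (x :: B') = (p - x) :: d x B' from rfl]
    by_cases hpx : p = x
    · subst hpx
      rw [sub_self, sv1_cons_zero]
      by_cases hx : p = 0
      · subst hx
        rw [if_pos rfl, sv1_cons_zero]
        have := ih 0 a ha
        rwa [if_pos rfl] at this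
      · rw [if_neg hx, sv1_cons_nz p hx, if_neg (by nlinarith [mul_self_nonneg p])]
        have := ih p a ha
        rw [if_neg hx] at this
        omega
    · have he : p - x ≠ 0 := sub_ne_zero.mpr hpx
      rw [sv1_cons_nz a he]
      by_cases hx : x = 0
      · subst hx
        have hp : p ≠ 0 := hpx
        rw [if_neg hp, sv1_cons_zero]
        have := ih 0 (p - 0) (by simpa using hp)
        rw [if_pos rfl, sub_zero] at this
        simp only [sub_zero]
        omega
      · have h2 := ih x (p - x) he
        rw [if_neg hx] at h2
        by_cases hp : p = 0
        · subst hp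
          rw [if_pos rfl, sv1_cons_nz a hx]
          have hbx : ((if (0 - x) * x < 0 then 1 else 0) : ℕ) = 1 := by
            rw [if_pos (by nlinarith [mul_self_pos.mpr hx])]
          have h5 : ((if a * x < 0 then 1 else 0) : ℕ) ≤ 1 := by split_ifs <;> omega
          omega
        · rw [if_neg hp, sv1_cons_nz p hx]
          have := beta_ineq ha hp hx he
          omega

lemma key_ineq : ∀ B : List ℝ, (∃ x ∈ B, x ≠ 0) → sv B + 1 ≤ sv (d 0 B) := by
  intro B
  induction B with
  | nil => rintro ⟨x, hx, -⟩; cases hx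
  | cons x B' ih =>
    rintro ⟨y, hy, hy0⟩
    rw [show d 0 (x :: B') = (0 - x) :: d x B' from rfl, zero_sub]
    by_cases hx : x = 0
    · subst hx
      rw [neg_zero, sv_cons_zero, sv_cons_zero, show d (0:ℝ) B' = d 0 B' from rfl]
      apply ih
      rcases List.mem_cons.mp hy with h | h
      · exact absurd h (by simpa using hy0)
      · exact ⟨y, h, hy0⟩
    · rw [sv_cons_nz hx, sv_cons_nz (neg_ne_zero.mpr hx)]
      have := master B' x (-x) (neg_ne_zero.mpr hx)
      rw [if_neg hx, if_pos (by nlinarith [mul_self_pos.mpr hx])] at this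
      omega

lemma sgn_pos_trans {u v w : ℝ} (h1 : 0 < u * v) (h2 : 0 < v * w) : 0 < u * w := by
  have hv : v ≠ 0 := by rintro rfl; simp at h1
  nlinarith [mul_pos h1 h2, mul_self_pos.mpr hv]

lemma sgn_neg_trans {u v w : ℝ} (h1 : u * v < 0) (h2 : v * w < 0) : 0 < u * w := by
  have hv : v ≠ 0 := by rintro rfl; simp at h1
  nlinarith [mul_pos_of_neg_of_neg h1 h2, mul_self_pos.mpr hv]

lemma sgn_mix_trans {u v w : ℝ} (h1 : 0 < u * v) (h2 : v * w < 0) : u * w < 0 := by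
  have hv : v ≠ 0 := by rintro rfl; simp at h1
  nlinarith [mul_neg_of_pos_of_neg h1 h2, mul_self_pos.mpr hv]

/-- Same sign up to positive scaling. -/
def sameSign (x y : ℝ) : Prop := ∃ c : ℝ, 0 < c ∧ y = c * x

lemma sameSign.zero_iff {x y : ℝ} (h : sameSign x y) : x = 0 ↔ y = 0 := by
  obtain ⟨c, hc, rfl⟩ := h
  constructor
  · rintro rfl; ring
  · intro h'
    rcases mul_eq_zero.mp h' with h'' | h''
    · exact absurd h'' (ne_of_gt hc)
    · exact h''

lemma sameSign.mul_neg_iff {x y x' y' : ℝ} (hx : sameSign x x') (hy : sameSign y y') :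
    x * y < 0 ↔ x' * y' < 0 := by
  obtain ⟨c, hc, rfl⟩ := hx
  obtain ⟨c', hc', rfl⟩ := hy
  constructor <;> intro h
  · nlinarith [mul_neg_of_pos_of_neg (mul_pos hc hc') h]
  · nlinarith [mul_pos hc hc']

lemma sv1_congr : ∀ {l l' : List ℝ}, List.Forall₂ sameSign l l' →
    ∀ x x', sameSign x x' → sv1 x l = sv1 x' l' := by
  intro l l' h
  induction h with
  | nil => intro x x' _; rfl
  | @cons y y' t t' hyy' ht ih =>
    intro x x' hxx'
    by_cases hy : y = 0
    · have hy' : y' = 0 := hyy'.zero_iff.mp hy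
      subst hy; subst hy'
      rw [sv1_cons_zero, sv1_cons_zero]
      exact ih x x' hxx'
    · have hy' : y' ≠ 0 := fun h' => hy (hyy'.zero_iff.mpr h')
      rw [sv1_cons_nz x hy, sv1_cons_nz x' hy', ih y y' hyy',
        if_congr (hxx'.mul_neg_iff hyy') rfl rfl]

lemma sv_congr : ∀ {l l' : List ℝ}, List.Forall₂ sameSign l l' → sv l = sv l' := by
  intro l l' h
  cases h with
  | nil => rfl
  | @cons y y' t t' hyy' ht =>
    by_cases hy : y = 0
    · have hy' : y' = 0 := hyy'.zero_iff.mp hy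
      subst hy; subst hy'
      rw [sv_cons_zero, sv_cons_zero]
      exact sv_congr ht
    · have hy' : y' ≠ 0 := fun h' => hy (hyy'.zero_iff.mpr h')
      rw [sv_cons_nz hy, sv_cons_nz hy']
      exact sv1_congr ht y y' hyy'

lemma sv_append_zeros : ∀ (l₁ l₂ : List ℝ), (∀ z ∈ l₁, z = 0) → sv (l₁ ++ l₂) = sv l₂ := by
  intro l₁
  induction l₁ with
  | nil => intro l₂ _; rfl
  | cons z t ih =>
    intro l₂ hz
    have : z = 0 := hz z List.mem_cons_self
    subst this
    rw [List.cons_append, sv_cons_zero]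
    exact ih l₂ fun w hw => hz w (List.mem_cons_of_mem _ hw)

lemma parity1 : ∀ (l : List ℝ) (x : ℝ), x ≠ 0 →
    (Even (sv1 x l) ↔ 0 < x * ((l.filter (fun z => decide (z ≠ 0))).getLastD x)) := by
  intro l
  induction l with
  | nil =>
    intro x hx
    simp [sv1_nil, mul_self_pos.mpr hx]
  | cons y t ih =>
    intro x hx
    by_cases hy : y = 0
    · subst hy
      rw [sv1_cons_zero, filter_cons_zero]
      exact ih x hx
    · rw [sv1_cons_nz x hy, filter_cons_nz hy, List.getLastD_cons]
      set L := (t.filter (fun z => decide (z ≠ 0))).getLastD y with hL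
      have hLne : L ≠ 0 := by
        rcases List.mem_cons.mp (List.getLastD_mem_cons : (t.filter (fun z => decide (z ≠ 0))).getLastD y ∈ y :: t.filter (fun z => decide (z ≠ 0))) with h | h
        · rw [hL, h]; exact hy
        · intro h0
          have := List.of_mem_filter (hL ▸ h)
          rw [h0] at this; simp at this
      have hIH := ih y hy
      by_cases hxy : x * y < 0
      · rw [if_pos hxy]
        rw [show (1 + sv1 y t) = sv1 y t + 1 from by omega, Nat.even_add_one]
        rw [hIH]
        constructor
        · intro h
          have hyL : y * L < 0 := by
            rcases lt_trichotomy (y * L) 0 with h' | h' | h'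
            · exact h'
            · exact absurd (mul_eq_zero.mp h') (by push_neg; exact ⟨hy, hLne⟩)
            · exact absurd h' h
          exact sgn_neg_trans hxy hyL
        · intro h h'
          exact absurd (sgn_pos_trans h' (by rwa [mul_comm] at h)) (by
            intro hyx
            nlinarith)
      · rw [if_neg hxy, Nat.zero_add, hIH]
        have hxy' : 0 < x * y :=
          lt_of_le_of_ne (not_lt.mp hxy) (Ne.symm (mul_ne_zero hx hy))
        constructor
        · intro h; exact sgn_pos_trans hxy' h
        · intro h
          rcases lt_trichotomy (y * L) 0 with h' | h' | h'
          · exact absurd (sgn_mix_trans hxy' h') (not_lt.mpr h.le)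
          · exact absurd (mul_eq_zero.mp h') (by push_neg; exact ⟨hy, hLne⟩)
          · exact h'

lemma d_map : ∀ (m : ℕ) (u : ℕ → ℝ) (c : ℝ),
    d c (List.map u (List.range (m + 1))) =
      (c - u 0) :: List.map (fun i => u i - (if i = m then 0 else u (i + 1))) (List.range (m + 1)) := by
  intro m
  induction m with
  | zero =>
    intro u c
    show d c [u 0] = (c - u 0) :: [u 0 - if 0 = 0 then 0 else u 1]
    rw [if_pos rfl, sub_zero]
    rfl
  | succ m ih =>
    intro u c
    rw [List.range_succ_eq_map, List.map_cons, List.map_map]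
    show (c - u 0) :: d (u 0) (List.map (u ∘ Nat.succ) (List.range (m + 1))) = _
    rw [ih (u ∘ Nat.succ) (u 0), List.map_cons, List.map_map]
    have hhead : u 0 - (u ∘ Nat.succ) 0 = u 0 - (if 0 = m + 1 then 0 else u (0 + 1)) := by
      rw [if_neg (Nat.succ_ne_zero m).symm]; rfl
    have htail :
        List.map (fun i => (u ∘ Nat.succ) i - if i = m then 0 else (u ∘ Nat.succ) (i + 1))
            (List.range (m + 1)) =
          List.map ((fun i => u i - if i = m + 1 then 0 else u (i + 1)) ∘ Nat.succ)
            (List.range (m + 1)) := by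
      apply List.map_congr_left
      intro i _
      show u (i + 1) - (if i = m then 0 else u (i + 2)) =
        u (i + 1) - (if i + 1 = m + 1 then 0 else u (i + 2))
      have hiff : (i = m) ↔ (i + 1 = m + 1) := by omega
      rw [if_congr hiff rfl rfl]
    rw [hhead, htail]

lemma forall₂_map_range {f g : ℕ → ℝ} (l : List ℕ) (h : ∀ i ∈ l, sameSign (f i) (g i)) :
    List.Forall₂ sameSign (List.map f l) (List.map g l) := by
  induction l with
  | nil => exact List.Forall₂.nil
  | cons i t ih =>
    exact List.Forall₂.cons (h i List.mem_cons_self)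
      (ih fun j hj => h j (List.mem_cons_of_mem _ hj))

open Polynomial in
noncomputable def cl (p : ℝ[X]) : List ℝ := (List.range (p.natDegree + 1)).map p.coeff

open Polynomial in
lemma coeff_lin_mul_zero (r : ℝ) (b : ℝ[X]) :
    ((X - C r) * b).coeff 0 = (0 - r) * b.coeff 0 := by
  rw [mul_coeff_zero, coeff_sub, coeff_X_zero, coeff_C_zero]

open Polynomial in
lemma coeff_lin_mul_succ (r : ℝ) (b : ℝ[X]) (k : ℕ) :
    ((X - C r) * b).coeff (k + 1) = b.coeff k - r * b.coeff (k + 1) := by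
  rw [sub_mul, coeff_sub, coeff_X_mul, coeff_C_mul]

open Polynomial in
lemma sv_step (b : ℝ[X]) (hb : b ≠ 0) (r : ℝ) (hr : 0 < r) :
    sv (cl b) + 1 ≤ sv (cl ((X - C r) * b)) := by
  set n := b.natDegree with hn
  set a := (X - C r) * b with ha
  have haz : a ≠ 0 := mul_ne_zero (X_sub_C_ne_zero r) hb
  have hdeg : a.natDegree = n + 1 := by
    rw [ha, natDegree_mul (X_sub_C_ne_zero r) hb, natDegree_X_sub_C]; omega
  set u : ℕ → ℝ := fun i => b.coeff i * r ^ i with hu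
  set B := List.map u (List.range (n + 1)) with hB
  have h1 : sv (cl b) = sv B := by
    apply sv_congr
    apply forall₂_map_range
    intro i _
    exact ⟨r ^ i, pow_pos hr i, mul_comm _ _⟩
  have hnz : ∃ x ∈ B, x ≠ 0 := by
    refine ⟨u n, List.mem_map.mpr ⟨n, List.mem_range.mpr (Nat.lt_succ_self n), rfl⟩, ?_⟩
    exact mul_ne_zero (by rw [hn, coeff_natDegree]; exact leadingCoeff_ne_zero.mpr hb)
      (pow_ne_zero _ hr.ne')
  have h2 : sv B + 1 ≤ sv (d 0 B) := key_ineq B hnz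
  have h3 : sv (cl a) = sv (d 0 B) := by
    rw [hB, d_map n u 0]
    have hcl : cl a = a.coeff 0 :: List.map (fun i => a.coeff (i + 1)) (List.range (n + 1)) := by
      rw [cl, hdeg, List.range_succ_eq_map, List.map_cons, List.map_map]
      rfl
    rw [hcl]
    apply sv_congr
    refine List.Forall₂.cons ?_ ?_
    · refine ⟨r⁻¹, inv_pos.mpr hr, ?_⟩
      rw [ha, coeff_lin_mul_zero]
      simp only [hu]
      field_simp
      ring
    · apply forall₂_map_range
      intro i hi
      rw [List.mem_range] at hi
      by_cases hin : i = n
      · refine ⟨r ^ i, pow_pos hr i, ?_⟩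
        rw [if_pos hin, ha, coeff_lin_mul_succ]
        have hz : b.coeff (i + 1) = 0 := by
          rw [hin, hn]; exact coeff_natDegree_succ_eq_zero
        rw [hz]
        simp only [hu]
        ring
      · refine ⟨r ^ i, pow_pos hr i, ?_⟩
        rw [if_neg hin, ha, coeff_lin_mul_succ]
        simp only [hu]
        ring
  omega
open Polynomial in
lemma poly_parity (a : ℝ[X]) (ha : a ≠ 0) :
    Even (sv (cl a)) ↔ 0 < a.trailingCoeff * a.leadingCoeff := by
  set t := a.natTrailingDegree with htdef
  set n := a.natDegree with hndef
  have htn : t ≤ n := natTrailingDegree_le_natDegree a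
  obtain ⟨m, hm⟩ : ∃ m, n + 1 = t + (m + 1) := ⟨n - t, by omega⟩
  have htrne : a.trailingCoeff ≠ 0 := fun h => ha (trailingCoeff_eq_zero.mp h)
  have htr : a.trailingCoeff = a.coeff t := rfl
  have hldne : a.leadingCoeff ≠ 0 := leadingCoeff_ne_zero.mpr ha
  have hld : a.leadingCoeff = a.coeff n := coeff_natDegree.symm
  have hsplit : cl a = List.map a.coeff (List.range t)
      ++ List.map (fun i => a.coeff (t + i)) (List.range (m + 1)) := by
    rw [cl, ← hndef, hm, List.range_add, List.map_append, List.map_map]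
    rfl
  have h0 : sv (cl a) = sv (List.map (fun i => a.coeff (t + i)) (List.range (m + 1))) := by
    rw [hsplit]
    apply sv_append_zeros
    intro z hz
    obtain ⟨i, hi, rfl⟩ := List.mem_map.mp hz
    exact coeff_eq_zero_of_lt_natTrailingDegree (List.mem_range.mp hi)
  rw [List.range_succ_eq_map, List.map_cons, List.map_map] at h0
  simp only [Nat.add_zero] at h0
  set rest := List.map ((fun i => a.coeff (t + i)) ∘ Nat.succ) (List.range m) with hrest
  have h1 : sv (cl a) = sv1 a.trailingCoeff rest := by
    rw [h0, sv_cons_nz (htr ▸ htrne), htr]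
  have hL : ((rest.filter (fun z => decide (z ≠ 0))).getLastD a.trailingCoeff)
      = a.leadingCoeff := by
    cases m with
    | zero =>
      have htn' : t = n := by omega
      simp only [hrest, List.range_zero, List.map_nil, List.filter_nil, List.getLastD_nil]
      rw [htr, hld, htn']
    | succ m' =>
      have hind : t + Nat.succ m' = n := by omega
      have hlast : ((fun i => a.coeff (t + i)) ∘ Nat.succ) m' = a.leadingCoeff := by
        show a.coeff (t + Nat.succ m') = _
        rw [hind, hld]
      rw [hrest, List.range_succ, List.map_append]
      simp only [List.map_cons, List.map_nil, hlast]
      rw [List.filter_append, filter_cons_nz hldne, List.filter_nil, List.getLastD_concat]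
  rw [h1, parity1 rest a.trailingCoeff htrne, hL]

open Polynomial Filter in
lemma base_sign (a : ℝ[X]) (ha : a ≠ 0) (h : ∀ x : ℝ, 0 < x → ¬a.IsRoot x) :
    0 < a.trailingCoeff * a.leadingCoeff := by
  set t := a.natTrailingDegree with htdef
  have hdvd : (X : ℝ[X]) ^ t ∣ a :=
    X_pow_dvd_iff.mpr fun d hd => coeff_eq_zero_of_lt_natTrailingDegree hd
  obtain ⟨q, hq⟩ := hdvd
  have hq0 : q ≠ 0 := by rintro rfl; rw [mul_zero] at hq; exact ha hq
  have htrne : a.trailingCoeff ≠ 0 := fun h' => ha (trailingCoeff_eq_zero.mp h')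
  have hcoeff : q.coeff 0 = a.trailingCoeff := by
    have h' := coeff_X_pow_mul q t 0
    rw [← hq] at h'
    exact (by simpa using h'.symm : q.coeff 0 = a.coeff t)
  have hlead : q.leadingCoeff = a.leadingCoeff := by
    rw [hq, leadingCoeff_mul, leadingCoeff_X_pow, one_mul]
  have hq00 : q.eval 0 ≠ 0 := by
    rw [← coeff_zero_eq_eval_zero, hcoeff]; exact htrne
  have hqroots : ∀ x : ℝ, 0 < x → q.eval x ≠ 0 := by
    intro x hx hx0
    exact h x hx (by
      show a.eval x = 0
      rw [hq, eval_mul, eval_pow, eval_X, hx0, mul_zero])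
  have hsign : ∀ x : ℝ, 0 ≤ x → 0 < q.eval 0 * q.eval x := by
    intro x hx
    rcases eq_or_lt_of_le hx with h' | h'
    · rw [← h']; exact mul_self_pos.mpr hq00
    · by_contra hc
      push_neg at hc
      have hlt : q.eval 0 * q.eval x < 0 :=
        lt_of_le_of_ne hc (mul_ne_zero hq00 (hqroots x h'))
      have hcont : ContinuousOn (fun y => eval y q) (Set.Icc 0 x) :=
        (Polynomial.continuous q).continuousOn
      rcases lt_or_gt_of_ne hq00 with h0 | h0
      · have hx0 : 0 < q.eval x := by nlinarith
        obtain ⟨c, hc1, hc2⟩ := intermediate_value_Ioo h'.le hcont (Set.mem_Ioo.mpr ⟨h0, hx0⟩)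
        exact hqroots c hc1.1 hc2
      · have hx0 : q.eval x < 0 := by nlinarith
        obtain ⟨c, hc1, hc2⟩ := intermediate_value_Ioo' h'.le hcont (Set.mem_Ioo.mpr ⟨hx0, h0⟩)
        exact hqroots c hc1.1 hc2
  rw [← hcoeff, ← hlead, coeff_zero_eq_eval_zero]
  rcases Nat.eq_zero_or_pos q.natDegree with hdeg | hdeg
  · have hlc : q.leadingCoeff = q.eval 0 := by
      rw [← coeff_natDegree, hdeg, coeff_zero_eq_eval_zero]
    rw [hlc]
    exact mul_self_pos.mpr hq00
  · have hdeg' : 0 < q.degree := natDegree_pos_iff_degree_pos.mp hdeg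
    rcases lt_or_gt_of_ne (leadingCoeff_ne_zero.mpr hq0) with hl | hl
    · have htb := tendsto_atBot_of_leadingCoeff_nonpos q hdeg' hl.le
      obtain ⟨y, hy1, hy2⟩ :=
        ((htb.eventually (eventually_lt_atBot (0 : ℝ))).and (eventually_ge_atTop (0 : ℝ))).exists
      have hs := hsign y hy2
      have h00 : q.eval 0 < 0 := by nlinarith
      exact mul_pos_of_neg_of_neg h00 hl
    · have htb := tendsto_atTop_of_leadingCoeff_nonneg q hdeg' hl.le
      obtain ⟨y, hy1, hy2⟩ :=
        ((htb.eventually (eventually_gt_atTop (0 : ℝ))).and (eventually_ge_atTop (0 : ℝ))).exists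
      have hs := hsign y hy2
      have h00 : 0 < q.eval 0 := by nlinarith
      exact mul_pos h00 hl

lemma even_diff_exists {A B : ℕ} (h : B ≤ A) (he : Even A ↔ Even B) : ∃ k, A = B + 2 * k := by
  obtain ⟨k, hk⟩ := (Nat.even_sub h).mpr he
  exact ⟨k, by omega⟩

open Polynomial in
lemma main_induction : ∀ (m : ℕ) (a : ℝ[X]), a ≠ 0 →
    Multiset.card (a.roots.filter (fun x => 0 < x)) = m → ∃ k, sv (cl a) = m + 2 * k := by
  intro m
  induction m with
  | zero =>
    intro a ha hcard
    have hnoroot : ∀ x : ℝ, 0 < x → ¬a.IsRoot x := by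
      intro x hx hroot
      have hmem : x ∈ a.roots.filter (fun x => 0 < x) :=
        Multiset.mem_filter.mpr ⟨(mem_roots ha).mpr hroot, hx⟩
      rw [Multiset.card_eq_zero] at hcard
      rw [hcard] at hmem
      exact absurd hmem (Multiset.notMem_zero x)
    obtain ⟨k, hk⟩ := (poly_parity a ha).mpr (base_sign a ha hnoroot)
    exact ⟨k, by omega⟩
  | succ m ih =>
    intro a ha hcard
    obtain ⟨r, hr⟩ := Multiset.card_pos_iff_exists_mem.mp
      (show 0 < Multiset.card (a.roots.filter (fun x => 0 < x)) by omega)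
    rw [Multiset.mem_filter] at hr
    obtain ⟨hr1, hr2⟩ := hr
    have hroot : a.IsRoot r := (mem_roots ha).mp hr1
    obtain ⟨b, hb⟩ := dvd_iff_isRoot.mpr hroot
    have hbne : b ≠ 0 := by rintro rfl; rw [mul_zero] at hb; exact ha hb
    have hroots : a.roots = r ::ₘ b.roots := by
      rw [hb, roots_mul (hb ▸ ha), roots_X_sub_C, Multiset.singleton_add]
    have hcb : Multiset.card (b.roots.filter (fun x => 0 < x)) = m := by
      rw [hroots, Multiset.filter_cons, if_pos hr2, Multiset.card_add,
        Multiset.card_singleton] at hcard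
      omega
    obtain ⟨k1, hk1⟩ := ih b hbne hcb
    have hineq : sv (cl b) + 1 ≤ sv (cl a) := by
      rw [hb]; exact sv_step b hbne r hr2
    have htl : a.trailingCoeff * a.leadingCoeff = -r * (b.trailingCoeff * b.leadingCoeff) := by
      rw [hb, trailingCoeff_mul, leadingCoeff_mul, leadingCoeff_X_sub_C]
      have h1 : (X - C r : ℝ[X]).trailingCoeff = -r := by
        have hcz : (X - C r : ℝ[X]).coeff 0 = -r := by
          rw [coeff_sub, coeff_X_zero, coeff_C_zero]; ring
        have hnt : (X - C r : ℝ[X]).natTrailingDegree = 0 :=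
          natTrailingDegree_eq_zero.mpr (Or.inr (by rw [hcz]; exact neg_ne_zero.mpr hr2.ne'))
        show (X - C r : ℝ[X]).coeff _ = -r
        rw [hnt, hcz]
      rw [h1]
      ring
    have hbprod : b.trailingCoeff * b.leadingCoeff ≠ 0 :=
      mul_ne_zero (fun h' => hbne (trailingCoeff_eq_zero.mp h'))
        (leadingCoeff_ne_zero.mpr hbne)
    have hflip : Even (sv (cl a)) ↔ ¬ Even (sv (cl b)) := by
      rw [poly_parity a ha, poly_parity b hbne, htl]
      constructor
      · intro h1 h2; nlinarith
      · intro h1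
        rcases lt_or_gt_of_ne hbprod with h' | h'
        · nlinarith
        · exact absurd h' h1
    obtain ⟨k2, hk2⟩ := even_diff_exists hineq (hflip.trans (Nat.even_add_one).symm)
    exact ⟨k1 + k2, by omega⟩

theorem descartes_rule_of_signs (a : Polynomial ℝ) (ha : a ≠ 0) :
    ∃ k : ℕ,
      signChanges ((List.range (a.natDegree + 1)).map a.coeff) =
        (a.roots.filter (fun x => 0 < x)).card + 2 * k := by
  rw [signChanges_eq_sv]
  exact main_induction _ a ha rfl
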